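/- Let m ≥ 0 and k ≥ 0 be integers. Then S_k(m) := ∑_{k1+k2=k, k1,k2 ≥ 0} (1/(k1! · k2!)) · Γ(m+3/2)² / (Γ(m+k1+3/2) · Γ(m+k2+3/2)) satisfies S_k(m) ≤ 2^k / (k! · (m+3/2)^k). -/

import Mathlib

open Real

/-- `S_k(m)` from the paper:
`∑_{k₁+k₂=k} (1/(k₁! k₂!)) Γ(m+3/2)² / (Γ(m+k₁+3/2) Γ(m+k₂+3/2))`. -/
noncomputable def S (k m : ℕ) : ℝ :=
  ∑ p ∈ Finset.HasAntidiagonal.antidiagonal k,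
    (1 / ((Nat.factorial p.1 : ℝ) * (Nat.factorial p.2 : ℝ))) *
      (Real.Gamma ((m : ℝ) + 3 / 2) ^ 2 /
        (Real.Gamma ((m : ℝ) + (p.1 : ℝ) + 3 / 2) * Real.Gamma ((m : ℝ) + (p.2 : ℝ) + 3 / 2)))

lemma gamma_ge (x : ℝ) (hx : 0 < x) (j : ℕ) :
    x ^ j * Real.Gamma x ≤ Real.Gamma (x + j) := by
  induction j with
  | zero => simp
  | succ n ih =>
    have hxn : (0:ℝ) < x + n := by positivity
    have hG : Real.Gamma (x + (n + 1 : ℕ)) = (x + n) * Real.Gamma (x + n) := by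
      rw [show x + ((n : ℕ) + 1 : ℕ) = (x + n) + 1 by push_cast; ring,
        Real.Gamma_add_one hxn.ne']
    have hGx : 0 < Real.Gamma x := Real.Gamma_pos_of_pos hx
    calc x ^ (n+1) * Real.Gamma x = x * (x ^ n * Real.Gamma x) := by ring
      _ ≤ (x + n) * Real.Gamma (x + n) :=
          mul_le_mul (by linarith [Nat.cast_nonneg (α := ℝ) n]) ih (by positivity) hxn.le
      _ = Real.Gamma (x + (n + 1 : ℕ)) := hG.symm

theorem S_le (m k : ℕ) :
    S k m ≤ 2 ^ k / ((Nat.factorial k : ℝ) * ((m : ℝ) + 3 / 2) ^ k) := by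
  set x : ℝ := (m : ℝ) + 3 / 2 with hxdef
  have hx : 0 < x := by positivity
  have hGx : 0 < Real.Gamma x := Real.Gamma_pos_of_pos hx
  have hterm : ∀ p ∈ Finset.HasAntidiagonal.antidiagonal k,
      (1 / ((Nat.factorial p.1 : ℝ) * (Nat.factorial p.2 : ℝ))) *
        (Real.Gamma ((m : ℝ) + 3 / 2) ^ 2 /
          (Real.Gamma ((m : ℝ) + (p.1 : ℝ) + 3 / 2) * Real.Gamma ((m : ℝ) + (p.2 : ℝ) + 3 / 2)))
        ≤ (k.choose p.1 : ℝ) / (Nat.factorial k : ℝ) * (1 / x ^ k) := by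
    intro p hp
    rw [Finset.HasAntidiagonal.mem_antidiagonal] at hp
    have h1 : Real.Gamma ((m : ℝ) + (p.1 : ℝ) + 3 / 2) = Real.Gamma (x + p.1) := by
      rw [hxdef]; ring_nf
    have h2 : Real.Gamma ((m : ℝ) + (p.2 : ℝ) + 3 / 2) = Real.Gamma (x + p.2) := by
      rw [hxdef]; ring_nf
    have hg1 := gamma_ge x hx p.1
    have hg2 := gamma_ge x hx p.2
    have hp1 : 0 < Real.Gamma (x + p.1) := Real.Gamma_pos_of_pos (by positivity)
    have hp2 : 0 < Real.Gamma (x + p.2) := Real.Gamma_pos_of_pos (by positivity)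
    have hratio : Real.Gamma x ^ 2 / (Real.Gamma (x + p.1) * Real.Gamma (x + p.2))
        ≤ 1 / x ^ k := by
      rw [div_le_div_iff₀ (by positivity) (by positivity)]
      have : x ^ k * Real.Gamma x ^ 2 = (x ^ p.1 * Real.Gamma x) * (x ^ p.2 * Real.Gamma x) := by
        rw [← hp, pow_add]; ring
      calc Real.Gamma x ^ 2 * x ^ k
          = (x ^ p.1 * Real.Gamma x) * (x ^ p.2 * Real.Gamma x) := by rw [← this]; ring
        _ ≤ Real.Gamma (x + p.1) * Real.Gamma (x + p.2) :=
            mul_le_mul hg1 hg2 (by positivity) hp1.le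
        _ = 1 * (Real.Gamma (x + p.1) * Real.Gamma (x + p.2)) := by ring
    have hfac : (1 : ℝ) / ((Nat.factorial p.1 : ℝ) * (Nat.factorial p.2 : ℝ))
        = (k.choose p.1 : ℝ) / (Nat.factorial k : ℝ) := by
      have hle : p.1 ≤ k := by omega
      rw [Nat.cast_choose ℝ hle]
      have : k - p.1 = p.2 := by omega
      rw [this]
      field_simp
    rw [h1, h2, hfac, hxdef]
    apply mul_le_mul_of_nonneg_left hratio (by positivity)
  have hsum : ∑ p ∈ Finset.HasAntidiagonal.antidiagonal k, (k.choose p.1 : ℝ) / (Nat.factorial k : ℝ) * (1 / x ^ k)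
      = 2 ^ k / ((Nat.factorial k : ℝ) * x ^ k) := by
    rw [← Finset.sum_mul, ← Finset.sum_div]
    have : ∑ p ∈ Finset.HasAntidiagonal.antidiagonal k, (k.choose p.1 : ℝ) = 2 ^ k := by
      rw [Finset.Nat.sum_antidiagonal_eq_sum_range_succ_mk]
      exact_mod_cast Nat.sum_range_choose k
    rw [this]
    field_simp
  calc S k m ≤ ∑ p ∈ Finset.HasAntidiagonal.antidiagonal k,
        (k.choose p.1 : ℝ) / (Nat.factorial k : ℝ) * (1 / x ^ k) :=
      Finset.sum_le_sum hterm
    _ = 2 ^ k / ((Nat.factorial k : ℝ) * x ^ k) := hsum
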